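/- Let n ≥ 5 be an integer and let v : ℝ → (0,∞) be a C⁴ function. Define u : ℝⁿ \ {0} → (0,∞) by u(x) = |x|^{(4−n)/2} v(−log|x|). Then u satisfies Δ²u = (n(n−4)(n²−4)/16) u^{(n+4)/(n−4)} on ℝⁿ \ {0} if and only if v satisfies the Delaunay ODE v⁗ − ((n(n−4)+8)/2) v″ + (n²(n−4)²/16) v − (n(n²−4)(n−4)/16) v^{(n+4)/(n−4)} = 0 on ℝ. -/

import Mathlib

open scoped BigOperators

open scoped RealInnerProductSpace

/-- The Euclidean Laplacian on `ℝⁿ`: the sum of the second partial derivatives. -/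
noncomputable def Lap {n : ℕ} (u : EuclideanSpace ℝ (Fin n) → ℝ) :
    EuclideanSpace ℝ (Fin n) → ℝ := fun x =>
  ∑ i : Fin n,
    fderiv ℝ (fun y => fderiv ℝ u y (EuclideanSpace.single i 1)) x (EuclideanSpace.single i 1)

/-- The bilaplacian `Δ² = Δ ∘ Δ`. -/
noncomputable def BiLap {n : ℕ} (u : EuclideanSpace ℝ (Fin n) → ℝ) :
    EuclideanSpace ℝ (Fin n) → ℝ := Lap (Lap u)

lemma lap_congr {n : ℕ} (h₁ h₂ : EuclideanSpace ℝ (Fin n) → ℝ) {s : Set (EuclideanSpace ℝ (Fin n))}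
    (hs : IsOpen s) {x : EuclideanSpace ℝ (Fin n)} (hx : x ∈ s) (heq : Set.EqOn h₁ h₂ s) :
    Lap h₁ x = Lap h₂ x := by
  unfold Lap
  refine Finset.sum_congr rfl fun i _ => ?_
  have inner_eq : Set.EqOn (fun y => fderiv ℝ h₁ y (EuclideanSpace.single i 1))
      (fun y => fderiv ℝ h₂ y (EuclideanSpace.single i 1)) s := by
    intro y hy
    have hev : h₁ =ᶠ[nhds y] h₂ := Filter.eventuallyEq_of_mem (hs.mem_nhds hy) heq
    simp only
    rw [hev.fderiv_eq]
  have hev2 := Filter.eventuallyEq_of_mem (hs.mem_nhds hx) inner_eq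
  rw [hev2.fderiv_eq]

lemma EF_hasDerivAt (a : ℝ) (φ φ' : ℝ → ℝ) (hφ : ∀ t, HasDerivAt φ (φ' t) t)
    (r : ℝ) (hr : 0 < r) :
    HasDerivAt (fun s : ℝ => s ^ a * φ (-Real.log s))
      (r ^ (a - 1) * (a * φ (-Real.log r) - φ' (-Real.log r))) r := by
  have hp : HasDerivAt (fun s : ℝ => s ^ a) (a * r ^ (a - 1)) r :=
    Real.hasDerivAt_rpow_const (Or.inl hr.ne')
  have hl : HasDerivAt (fun s : ℝ => -Real.log s) (-r⁻¹) r := (Real.hasDerivAt_log hr.ne').neg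
  have hc : HasDerivAt (fun s : ℝ => φ (-Real.log s)) (φ' (-Real.log r) * (-r⁻¹)) r :=
    (hφ _).comp r hl
  have h : HasDerivAt (fun s : ℝ => s ^ a * φ (-Real.log s)) _ r := hp.mul hc
  convert h using 1
  have e : r ^ (a - 1) = r ^ a * r⁻¹ := by
    rw [Real.rpow_sub hr, Real.rpow_one, div_eq_mul_inv]
  rw [e]; ring

section lapEF
variable {n : ℕ}

lemma hasFDerivAt_norm' {E : Type*} [NormedAddCommGroup E] [InnerProductSpace ℝ E]
    (x : E) (hx : x ≠ 0) :
    HasFDerivAt (fun y : E => ‖y‖) ((‖x‖⁻¹ : ℝ) • innerSL ℝ x) x := by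
  have hx' : (0:ℝ) < ‖x‖ := norm_pos_iff.2 hx
  have h1 : HasFDerivAt (fun y : E => ‖y‖^2) (2 • (innerSL ℝ x)) x :=
    (hasStrictFDerivAt_norm_sq x).hasFDerivAt
  have h2 : HasDerivAt Real.sqrt (1/(2*Real.sqrt (‖x‖^2))) (‖x‖^2) :=
    Real.hasDerivAt_sqrt (by positivity)
  have h3 := h2.comp_hasFDerivAt x h1
  rw [show Real.sqrt ∘ (fun y : E => ‖y‖^2) = (fun y : E => ‖y‖)
    from funext fun y => Real.sqrt_sq (norm_nonneg y)] at h3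
  convert h3 using 1
  · rfl
  · rfl
  rw [Real.sqrt_sq hx'.le]
  ext y
  simp [smul_smul]
  field_simp

lemma lap_radial (f f' f'' : ℝ → ℝ)
    (h1 : ∀ r, 0 < r → HasDerivAt f (f' r) r)
    (h2 : ∀ r, 0 < r → HasDerivAt f' (f'' r) r)
    (x : EuclideanSpace ℝ (Fin n)) (hx : x ≠ 0) :
    Lap (fun y => f ‖y‖) x = f'' ‖x‖ + ((n : ℝ) - 1) / ‖x‖ * f' ‖x‖ := by
  have hr : (0:ℝ) < ‖x‖ := norm_pos_iff.2 hx
  set r := ‖x‖ with hrdef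
  have hF : ∀ (y : EuclideanSpace ℝ (Fin n)), y ≠ 0 →
      HasFDerivAt (fun y => f ‖y‖) ((f' ‖y‖) • ((‖y‖⁻¹ : ℝ) • innerSL ℝ y)) y := by
    intro y hy
    exact (h1 ‖y‖ (norm_pos_iff.2 hy)).comp_hasFDerivAt y (hasFDerivAt_norm' y hy)
  have key : ∀ i : Fin n,
      Set.EqOn (fun y => fderiv ℝ (fun y => f ‖y‖) y (EuclideanSpace.single i 1))
        (fun y => f' ‖y‖ * (‖y‖⁻¹ * y i)) {y | y ≠ 0} := by
    intro i y hy
    simp only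
    rw [(hF y hy).fderiv]
    simp [EuclideanSpace.inner_single_right, real_inner_comm]
  have hproj : ∀ (i : Fin n) (z : EuclideanSpace ℝ (Fin n)),
      HasFDerivAt (fun y : EuclideanSpace ℝ (Fin n) => y i)
        (innerSL ℝ (EuclideanSpace.single i (1:ℝ))) z := by
    intro i z
    have h := (innerSL ℝ (EuclideanSpace.single i (1:ℝ))).hasFDerivAt (x := z)
    have : ⇑(innerSL ℝ (EuclideanSpace.single i (1:ℝ)))
        = fun y : EuclideanSpace ℝ (Fin n) => y i := by
      funext y; simp [EuclideanSpace.inner_single_left]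
    rwa [this] at h
  have hopen : IsOpen {y : EuclideanSpace ℝ (Fin n) | y ≠ 0} := isOpen_compl_singleton
  have main : ∀ i : Fin n,
      fderiv ℝ (fun y => fderiv ℝ (fun y => f ‖y‖) y (EuclideanSpace.single i 1)) x
          (EuclideanSpace.single i 1)
        = f'' r * (r⁻¹ * x i) * (r⁻¹ * x i)
          + f' r * (r⁻¹ - x i * (r⁻¹ * r⁻¹ * (r⁻¹ * x i))) := by
    intro i
    have hev : (fun y => fderiv ℝ (fun y => f ‖y‖) y (EuclideanSpace.single i 1))
        =ᶠ[nhds x] (fun y => f' ‖y‖ * (‖y‖⁻¹ * y i)) :=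
      Filter.eventuallyEq_of_mem (hopen.mem_nhds hx) (key i)
    rw [hev.fderiv_eq]
    have hA : HasFDerivAt (fun y : EuclideanSpace ℝ (Fin n) => f' ‖y‖)
        ((f'' r) • ((r⁻¹ : ℝ) • innerSL ℝ x)) x :=
      (h2 r hr).comp_hasFDerivAt x (hasFDerivAt_norm' x hx)
    have hinv : HasFDerivAt (fun y : EuclideanSpace ℝ (Fin n) => ‖y‖⁻¹)
        ((-(r^2)⁻¹) • ((r⁻¹ : ℝ) • innerSL ℝ x)) x :=
      (hasDerivAt_inv hr.ne').comp_hasFDerivAt x (hasFDerivAt_norm' x hx)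
    have hB := hinv.mul (hproj i x)
    have hG : HasFDerivAt (fun y : EuclideanSpace ℝ (Fin n) => f' ‖y‖ * (‖y‖⁻¹ * y i)) _ x :=
      hA.mul hB
    rw [hG.fderiv]
    simp [EuclideanSpace.inner_single_right, real_inner_comm, real_inner_self_eq_norm_sq]
    ring
  unfold Lap
  rw [Finset.sum_congr rfl (fun i _ => main i)]
  have hsum : ∑ i : Fin n, (x i)^2 = r^2 := by
    have := EuclideanSpace.norm_eq x
    rw [← hrdef] at this
    rw [show (r:ℝ)^2 = (Real.sqrt (∑ i, ‖x i‖^2))^2 by rw [← this]]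
    rw [Real.sq_sqrt (by positivity)]
    congr 1; funext i; rw [Real.norm_eq_abs, sq_abs]
  have expand : ∀ i : Fin n,
      f'' r * (r⁻¹ * x i) * (r⁻¹ * x i)
          + f' r * (r⁻¹ - x i * (r⁻¹ * r⁻¹ * (r⁻¹ * x i)))
        = (f'' r * (r⁻¹*r⁻¹) - f' r * (r⁻¹*r⁻¹*r⁻¹)) * (x i)^2 + f' r * r⁻¹ := by
    intro i; ring
  rw [Finset.sum_congr rfl (fun i _ => expand i), Finset.sum_add_distrib,
    ← Finset.mul_sum, hsum, Finset.sum_const, Finset.card_univ, Fintype.card_fin,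
    nsmul_eq_mul]
  field_simp
  ring

/-- One Laplacian step in Emden–Fowler coordinates. -/
lemma lap_EF (b : ℝ) (φ φ' φ'' : ℝ → ℝ)
    (hφ : ∀ t, HasDerivAt φ (φ' t) t) (hφ' : ∀ t, HasDerivAt φ' (φ'' t) t)
    (x : EuclideanSpace ℝ (Fin n)) (hx : x ≠ 0) :
    Lap (fun y => ‖y‖ ^ b * φ (-Real.log ‖y‖)) x
      = ‖x‖ ^ (b - 2) * (φ'' (-Real.log ‖x‖) - (2*b + (n:ℝ) - 2) * φ' (-Real.log ‖x‖)
          + b*(b + (n:ℝ) - 2) * φ (-Real.log ‖x‖)) := by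
  have hr : (0:ℝ) < ‖x‖ := norm_pos_iff.2 hx
  have hψ : ∀ t, HasDerivAt (fun t => b * φ t - φ' t) (b * φ' t - φ'' t) t :=
    fun t => ((hφ t).const_mul b).sub (hφ' t)
  have h1 : ∀ r, 0 < r → HasDerivAt (fun s : ℝ => s ^ b * φ (-Real.log s))
      ((fun s : ℝ => s ^ (b-1) * (b * φ (-Real.log s) - φ' (-Real.log s))) r) r :=
    fun r hr' => EF_hasDerivAt b φ φ' hφ r hr'
  have h2 : ∀ r, 0 < r → HasDerivAt
      (fun s : ℝ => s ^ (b-1) * (b * φ (-Real.log s) - φ' (-Real.log s)))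
      ((fun s : ℝ => s ^ (b-1-1) * ((b-1) * (b * φ (-Real.log s) - φ' (-Real.log s))
        - (b * φ' (-Real.log s) - φ'' (-Real.log s)))) r) r :=
    fun r hr' => EF_hasDerivAt (b-1) (fun t => b * φ t - φ' t) (fun t => b * φ' t - φ'' t)
      hψ r hr'
  have := lap_radial _ _ _ h1 h2 x hx
  rw [this]
  have e1 : ‖x‖ ^ (b-1-1) = ‖x‖ ^ (b-2) := by rw [show b-1-1 = b-2 by ring]
  have e2 : ‖x‖ ^ (b-1) = ‖x‖ ^ (b-2) * ‖x‖ := by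
    rw [show b - 1 = (b-2) + 1 by ring, Real.rpow_add hr, Real.rpow_one]
  rw [e1, e2]
  field_simp
  ring

end lapEF

lemma key_lemma (n : ℕ) (hn : 5 ≤ n) (v v1 v2 v3 v4 : ℝ → ℝ)
    (H0 : ∀ t, HasDerivAt v (v1 t) t) (H1 : ∀ t, HasDerivAt v1 (v2 t) t)
    (H2 : ∀ t, HasDerivAt v2 (v3 t) t) (H3 : ∀ t, HasDerivAt v3 (v4 t) t)
    (hvpos : ∀ t, 0 < v t) (x : EuclideanSpace ℝ (Fin n)) (hx : x ≠ 0) :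
    (BiLap (fun y => ‖y‖ ^ (((4 : ℝ) - n) / 2) * v (-Real.log ‖y‖)) x =
        (n * (n - 4) * (n ^ 2 - 4) / 16 : ℝ) *
          (‖x‖ ^ (((4 : ℝ) - n) / 2) * v (-Real.log ‖x‖)) ^
            (((n : ℝ) + 4) / ((n : ℝ) - 4))) ↔
    (v4 (-Real.log ‖x‖) - ((n * (n - 4) + 8) / 2 : ℝ) * v2 (-Real.log ‖x‖) +
        (n ^ 2 * (n - 4) ^ 2 / 16 : ℝ) * v (-Real.log ‖x‖) -
        (n * (n ^ 2 - 4) * (n - 4) / 16 : ℝ) *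
          v (-Real.log ‖x‖) ^ (((n : ℝ) + 4) / ((n : ℝ) - 4)) = 0) := by
  have hn5 : (5 : ℝ) ≤ (n : ℝ) := by exact_mod_cast hn
  have hn4 : ((n : ℝ) - 4) ≠ 0 := by linarith
  have hr : (0 : ℝ) < ‖x‖ := norm_pos_iff.2 hx
  set a : ℝ := ((4 : ℝ) - n) / 2 with ha
  set c : ℝ := (n : ℝ) * ((n : ℝ) - 4) / 4 with hc
  have Hw : ∀ t, HasDerivAt (fun t => v2 t - 2 * v1 t - c * v t)
      (v3 t - 2 * v2 t - c * v1 t) t :=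
    fun t => ((H2 t).sub ((H1 t).const_mul 2)).sub ((H0 t).const_mul c)
  have Hw' : ∀ t, HasDerivAt (fun t => v3 t - 2 * v2 t - c * v1 t)
      (v4 t - 2 * v3 t - c * v2 t) t :=
    fun t => ((H3 t).sub ((H2 t).const_mul 2)).sub ((H1 t).const_mul c)
  -- Laplacian of u on the punctured space
  have lapU : ∀ y : EuclideanSpace ℝ (Fin n), y ≠ 0 →
      Lap (fun y => ‖y‖ ^ a * v (-Real.log ‖y‖)) y
        = ‖y‖ ^ (a - 2) * (v2 (-Real.log ‖y‖) - 2 * v1 (-Real.log ‖y‖)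
            - c * v (-Real.log ‖y‖)) := by
    intro y hy
    rw [lap_EF a v v1 v2 H0 H1 y hy]
    congr 1
    rw [ha, hc]
    ring
  -- Bilaplacian
  have bilapU : BiLap (fun y => ‖y‖ ^ a * v (-Real.log ‖y‖)) x
      = ‖x‖ ^ (a - 2 - 2) * ((v4 (-Real.log ‖x‖) - 2 * v3 (-Real.log ‖x‖)
          - c * v2 (-Real.log ‖x‖))
        - (2*(a-2) + (n:ℝ) - 2) * (v3 (-Real.log ‖x‖) - 2 * v2 (-Real.log ‖x‖)
          - c * v1 (-Real.log ‖x‖))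
        + (a-2)*((a-2) + (n:ℝ) - 2) * (v2 (-Real.log ‖x‖) - 2 * v1 (-Real.log ‖x‖)
          - c * v (-Real.log ‖x‖))) := by
    have step : BiLap (fun y => ‖y‖ ^ a * v (-Real.log ‖y‖)) x
        = Lap (fun y => ‖y‖ ^ (a-2) * ((fun t => v2 t - 2 * v1 t - c * v t)
            (-Real.log ‖y‖))) x := by
      show Lap (Lap (fun y => ‖y‖ ^ a * v (-Real.log ‖y‖))) x = _
      exact lap_congr _ _ isOpen_compl_singleton hx (fun y hy => lapU y hy)
    rw [step, lap_EF (a-2) (fun t => v2 t - 2 * v1 t - c * v t)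
      (fun t => v3 t - 2 * v2 t - c * v1 t) (fun t => v4 t - 2 * v3 t - c * v2 t)
      Hw Hw' x hx]
  -- RHS in EF coordinates
  have hrw : (‖x‖ ^ a * v (-Real.log ‖x‖)) ^ (((n : ℝ) + 4) / ((n : ℝ) - 4))
      = ‖x‖ ^ (a - 2 - 2) * v (-Real.log ‖x‖) ^ (((n : ℝ) + 4) / ((n : ℝ) - 4)) := by
    rw [Real.mul_rpow (Real.rpow_nonneg hr.le a) (hvpos _).le, ← Real.rpow_mul hr.le]
    congr 2
    rw [ha]
    field_simp
    ring
  have hne : ‖x‖ ^ (a - 2 - 2) ≠ 0 := (Real.rpow_pos_of_pos hr _).ne'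
  rw [bilapU, hrw]
  constructor
  · intro h
    have h2 : (v4 (-Real.log ‖x‖) - 2 * v3 (-Real.log ‖x‖) - c * v2 (-Real.log ‖x‖))
        - (2*(a-2) + (n:ℝ) - 2) * (v3 (-Real.log ‖x‖) - 2 * v2 (-Real.log ‖x‖)
          - c * v1 (-Real.log ‖x‖))
        + (a-2)*((a-2) + (n:ℝ) - 2) * (v2 (-Real.log ‖x‖) - 2 * v1 (-Real.log ‖x‖)
          - c * v (-Real.log ‖x‖))
        = (n * (n - 4) * (n ^ 2 - 4) / 16 : ℝ) *
            v (-Real.log ‖x‖) ^ (((n : ℝ) + 4) / ((n : ℝ) - 4)) := by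
      apply mul_left_cancel₀ hne
      rw [h]; ring
    rw [ha, hc] at h2
    linear_combination h2
  · intro h
    have h2 : (v4 (-Real.log ‖x‖) - 2 * v3 (-Real.log ‖x‖) - c * v2 (-Real.log ‖x‖))
        - (2*(a-2) + (n:ℝ) - 2) * (v3 (-Real.log ‖x‖) - 2 * v2 (-Real.log ‖x‖)
          - c * v1 (-Real.log ‖x‖))
        + (a-2)*((a-2) + (n:ℝ) - 2) * (v2 (-Real.log ‖x‖) - 2 * v1 (-Real.log ‖x‖)
          - c * v (-Real.log ‖x‖))
        = (n * (n - 4) * (n ^ 2 - 4) / 16 : ℝ) *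
            v (-Real.log ‖x‖) ^ (((n : ℝ) + 4) / ((n : ℝ) - 4)) := by
      rw [ha, hc]
      linear_combination h
    rw [h2]; ring

lemma peel {f : ℝ → ℝ} {k : ℕ} (h : ContDiff ℝ (k + 1 : ℕ) f) :
    Differentiable ℝ f ∧ ContDiff ℝ (k : ℕ) (deriv f) := by
  have h' : ContDiff ℝ ((k : WithTop ℕ∞) + 1) f := by exact_mod_cast h
  obtain ⟨h1, -, h3⟩ := contDiff_succ_iff_deriv.mp h'
  exact ⟨h1, h3⟩

/-- `u(x) = |x|^{(4−n)/2} v(−log|x|)` solves the constant Q-curvature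
equation on `ℝⁿ \ {0}` if and only if `v` solves the Delaunay ODE on `ℝ`. -/
theorem stmt_5 (n : ℕ) (hn : 5 ≤ n) (v : ℝ → ℝ) (hv : ContDiff ℝ 4 v)
    (hvpos : ∀ t, 0 < v t) :
    (∀ x : EuclideanSpace ℝ (Fin n), x ≠ 0 →
        BiLap (fun y => ‖y‖ ^ (((4 : ℝ) - n) / 2) * v (-Real.log ‖y‖)) x =
          (n * (n - 4) * (n ^ 2 - 4) / 16 : ℝ) *
            (‖x‖ ^ (((4 : ℝ) - n) / 2) * v (-Real.log ‖x‖)) ^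
              (((n : ℝ) + 4) / ((n : ℝ) - 4))) ↔
    (∀ t : ℝ,
        iteratedDeriv 4 v t - ((n * (n - 4) + 8) / 2 : ℝ) * iteratedDeriv 2 v t +
          (n ^ 2 * (n - 4) ^ 2 / 16 : ℝ) * v t -
          (n * (n ^ 2 - 4) * (n - 4) / 16 : ℝ) *
            v t ^ (((n : ℝ) + 4) / ((n : ℝ) - 4)) = 0) := by
  have p0 := peel (k := 3) (by exact_mod_cast hv)
  have p1 := peel (k := 2) p0.2
  have p2 := peel (k := 1) p1.2
  have p3 := peel (k := 0) p2.2
  have H0 : ∀ t, HasDerivAt v (deriv v t) t := fun t => (p0.1 t).hasDerivAt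
  have H1 : ∀ t, HasDerivAt (deriv v) (deriv (deriv v) t) t := fun t => (p1.1 t).hasDerivAt
  have H2 : ∀ t, HasDerivAt (deriv (deriv v)) (deriv (deriv (deriv v)) t) t :=
    fun t => (p2.1 t).hasDerivAt
  have H3 : ∀ t, HasDerivAt (deriv (deriv (deriv v)))
      (deriv (deriv (deriv (deriv v))) t) t := fun t => (p3.1 t).hasDerivAt
  have hit4 : iteratedDeriv 4 v = deriv (deriv (deriv (deriv v))) := by
    rw [show (4:ℕ) = 3+1 from rfl, iteratedDeriv_succ, show (3:ℕ) = 2+1 from rfl,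
      iteratedDeriv_succ, show (2:ℕ) = 1+1 from rfl, iteratedDeriv_succ,
      show (1:ℕ) = 0+1 from rfl, iteratedDeriv_succ, iteratedDeriv_zero]
  have hit2 : iteratedDeriv 2 v = deriv (deriv v) := by
    rw [show (2:ℕ) = 1+1 from rfl, iteratedDeriv_succ,
      show (1:ℕ) = 0+1 from rfl, iteratedDeriv_succ, iteratedDeriv_zero]
  rw [hit4, hit2]
  constructor
  · intro h t
    set xt : EuclideanSpace ℝ (Fin n) :=
      Real.exp (-t) • EuclideanSpace.single (⟨0, by omega⟩ : Fin n) (1:ℝ) with hxt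
    have hnorm : ‖xt‖ = Real.exp (-t) := by
      rw [hxt, norm_smul, EuclideanSpace.norm_single]
      simp [Real.norm_eq_abs, Real.abs_exp]
    have hx0 : xt ≠ 0 := by
      have hne : ‖xt‖ ≠ 0 := by rw [hnorm]; exact (Real.exp_pos _).ne'
      exact norm_ne_zero_iff.mp hne
    have hlog : -Real.log ‖xt‖ = t := by rw [hnorm, Real.log_exp, neg_neg]
    have := (key_lemma n hn v _ _ _ _ H0 H1 H2 H3 hvpos xt hx0).mp (h xt hx0)
    rwa [hlog] at this
  · intro h x hx
    exact (key_lemma n hn v _ _ _ _ H0 H1 H2 H3 hvpos x hx).mpr (h (-Real.log ‖x‖))
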